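/- arXiv:2510.03937 — 2 statements merged into one kernel-verified Lean document; each statement's English description precedes it below -/
import Mathlib

section
/- If a downward uniformly bounded Markov chain on the nonnegative integers has finite mean drifts gamma_i for all i and gamma_i >= 0 for all i >= N (some N), then the chain is not positive recurrent (Kaplan's non-ergodicity criterion). -/
open scoped ENNReal BigOperators
open Filter

/-- A discrete-time Markov chain on the nonnegative integers, given by its
row-stochastic transition matrix. -/
structure MarkovChain where
  p : ℕ → ℕ → ℝ≥0∞
  row_sum : ∀ i, ∑' j, p i j = 1

namespace MarkovChain

/-- `n`-step transition probabilities. -/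
noncomputable def step (M : MarkovChain) : ℕ → ℕ → ℕ → ℝ≥0∞
  | 0, i, j => if i = j then 1 else 0
  | (n+1), i, j => ∑' k, M.p i k * M.step n k j

/-- Irreducibility: every state reaches every other state with positive probability. -/
def Irreducible (M : MarkovChain) : Prop := ∀ i j, ∃ n, 0 < M.step n i j

/-- Probability, starting from `j`, that the chain reaches state `i` for the first
time at time `n` (time `0` counts iff `j = i`). -/
noncomputable def hitAt (M : MarkovChain) (i : ℕ) : ℕ → ℕ → ℝ≥0∞
  | 0, j => if j = i then 1 else 0
  | (n+1), j => if j = i then 0 else ∑' k, M.p j k * M.hitAt i n k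

/-- Probability that the first return to `i` occurs at time `n + 1`. -/
noncomputable def firstReturn (M : MarkovChain) (i n : ℕ) : ℝ≥0∞ :=
  ∑' k, M.p i k * M.hitAt i n k

/-- The chain is recurrent: return to each state is almost sure. -/
def Recurrent (M : MarkovChain) : Prop := ∀ i, ∑' n, M.firstReturn i n = 1

/-- The chain is positive recurrent: recurrent with finite expected return times. -/
def PositiveRecurrent (M : MarkovChain) : Prop :=
  M.Recurrent ∧ ∀ i, ∑' n : ℕ, ((n : ℝ≥0∞) + 1) * M.firstReturn i n < ⊤

/-- Null recurrent: recurrent but not positive recurrent. -/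
def NullRecurrent (M : MarkovChain) : Prop := M.Recurrent ∧ ¬ M.PositiveRecurrent

/-- The chain is transient: return to each state happens with probability `< 1`. -/
def Transient (M : MarkovChain) : Prop := ∀ i, ∑' n, M.firstReturn i n < 1

/-- Mean drift at state `i`. -/
noncomputable def drift (M : MarkovChain) (i : ℕ) : ℝ :=
  ∑' j, (M.p i j).toReal * ((j : ℝ) - i)

/-- The mean drift at `i` is finite (well-defined). -/
def DriftFinite (M : MarkovChain) (i : ℕ) : Prop :=
  Summable fun j => (M.p i j).toReal * ((j : ℝ) - i)

/-- Second-moment drift at state `i`. -/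
noncomputable def secondMoment (M : MarkovChain) (i : ℕ) : ℝ :=
  ∑' j, (M.p i j).toReal * ((j : ℝ) - i) ^ 2

/-- Downward uniformly bounded with bound `k`: no downward jumps longer than `k`. -/
def DownwardBounded (M : MarkovChain) (k : ℕ) : Prop :=
  ∀ i j, j + k < i → M.p i j = 0

/-- Uniformly bounded with bound `d`: no jumps longer than `d`. -/
def UniformlyBounded (M : MarkovChain) (d : ℕ) : Prop :=
  ∀ i j : ℕ, (d : ℤ) < |(i : ℤ) - j| → M.p i j = 0

end MarkovChain

namespace MarkovChain

variable (M : MarkovChain)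

lemma tsum_split (f : ℕ → ℝ≥0∞) (l : ℕ) :
    ∑' x, f x = f l + ∑' x, if x = l then 0 else f x := by
  calc ∑' x, f x
      = ∑' x, ((if x = l then f l else 0) + (if x = l then 0 else f x)) := by
        refine tsum_congr fun x => ?_
        by_cases h : x = l
        · subst h; simp
        · simp [h]
    _ = (∑' x, if x = l then f l else 0) + ∑' x, if x = l then 0 else f x :=
        ENNReal.tsum_add
    _ = f l + ∑' x, if x = l then 0 else f x := by
        rw [tsum_eq_single l (by intro b hb; simp [hb])]
        simp

lemma p_le_one (i j : ℕ) : M.p i j ≤ 1 := M.row_sum i ▸ ENNReal.le_tsum j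

lemma p_ne_top (i j : ℕ) : M.p i j ≠ ⊤ :=
  ne_top_of_le_ne_top ENNReal.one_ne_top (M.p_le_one i j)

lemma hitAt_zero (i j : ℕ) : M.hitAt i 0 j = if j = i then 1 else 0 := rfl

lemma hitAt_succ (i n j : ℕ) :
    M.hitAt i (n+1) j = if j = i then 0 else ∑' k, M.p j k * M.hitAt i n k := rfl

/-- partial sums of first-hit probabilities are at most 1 -/
lemma hit_sum_le_one : ∀ m, ∀ j, ∑ n ∈ Finset.range m, M.hitAt 0 n j ≤ 1 := by
  intro m
  induction m with
  | zero => intro j; simp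
  | succ m ih =>
    intro j
    by_cases hj : j = 0
    · subst hj
      rw [Finset.sum_range_succ']
      simp only [hitAt_succ, if_pos rfl, hitAt_zero]
      simp
    · rw [Finset.sum_range_succ']
      simp only [hitAt_succ, if_neg hj, hitAt_zero, if_neg hj, add_zero]
      have hswap : ∑ n ∈ Finset.range m, ∑' k, M.p j k * M.hitAt 0 n k
          = ∑' k, ∑ n ∈ Finset.range m, M.p j k * M.hitAt 0 n k :=
        (Summable.tsum_finsetSum (fun _ _ => ENNReal.summable)).symm
      rw [hswap]
      calc ∑' k, ∑ n ∈ Finset.range m, M.p j k * M.hitAt 0 n k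
          = ∑' k, M.p j k * ∑ n ∈ Finset.range m, M.hitAt 0 n k := by
            refine tsum_congr fun k => ?_; rw [Finset.mul_sum]
        _ ≤ ∑' k, M.p j k * 1 :=
            ENNReal.tsum_le_tsum fun k => mul_le_mul_right (ih k) _
        _ = 1 := by simp [M.row_sum j]

lemma hp_le_one (j : ℕ) : ∑' n, M.hitAt 0 n j ≤ 1 :=
  Summable.tsum_le_of_sum_range_le ENNReal.summable (fun m => M.hit_sum_le_one m j)

lemma hp_zero : ∑' n, M.hitAt 0 n 0 = 1 := by
  rw [tsum_eq_zero_add' ENNReal.summable]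
  simp [hitAt_succ, hitAt_zero]

lemma hit_harmonic (j : ℕ) (hj : j ≠ 0) :
    ∑' n, M.hitAt 0 n j = ∑' k, M.p j k * ∑' n, M.hitAt 0 n k := by
  rw [tsum_eq_zero_add' ENNReal.summable]
  simp only [hitAt_zero, if_neg hj, hitAt_succ, if_neg hj, zero_add]
  rw [ENNReal.tsum_comm]
  exact tsum_congr fun k => ENNReal.tsum_mul_left

lemma return_eq (hrec : ∑' n, M.firstReturn 0 n = 1) :
    ∑' k, M.p 0 k * ∑' n, M.hitAt 0 n k = 1 := by
  rw [← hrec]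
  unfold firstReturn
  rw [show (∑' (k : ℕ), M.p 0 k * ∑' n, M.hitAt 0 n k)
      = ∑' (k : ℕ) (n : ℕ), M.p 0 k * M.hitAt 0 n k from
    tsum_congr fun k => ENNReal.tsum_mul_left.symm, ENNReal.tsum_comm]

/-- if the weighted average of hp over a row is 1, every state in the support has hp = 1 -/
lemma hp_eq_one_of_row (j : ℕ) (hrow : ∑' k, M.p j k * ∑' n, M.hitAt 0 n k = 1)
    (l : ℕ) (hl : M.p j l ≠ 0) : ∑' n, M.hitAt 0 n l = 1 := by
  by_contra hne
  have hlt : ∑' n, M.hitAt 0 n l < 1 := lt_of_le_of_ne (M.hp_le_one l) hne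
  have hb : (∑' x, if x = l then 0 else M.p j x) ≠ ⊤ := by
    refine ne_top_of_le_ne_top ENNReal.one_ne_top ?_
    rw [← M.row_sum j]
    exact ENNReal.tsum_le_tsum fun x => by split <;> simp
  have h1 : (1:ℝ≥0∞) < 1 := by
    calc (1:ℝ≥0∞) = ∑' k, M.p j k * ∑' n, M.hitAt 0 n k := hrow.symm
      _ = M.p j l * (∑' n, M.hitAt 0 n l)
          + ∑' x, if x = l then 0 else M.p j x * ∑' n, M.hitAt 0 n x :=
          tsum_split _ l
      _ ≤ M.p j l * (∑' n, M.hitAt 0 n l) + ∑' x, if x = l then 0 else M.p j x := by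
          refine add_le_add_right (ENNReal.tsum_le_tsum fun x => ?_) _
          split
          · exact le_rfl
          · calc M.p j x * ∑' n, M.hitAt 0 n x ≤ M.p j x * 1 :=
                mul_le_mul_right (M.hp_le_one x) _
              _ = M.p j x := mul_one _
      _ < M.p j l * 1 + ∑' x, if x = l then 0 else M.p j x := by
          refine ENNReal.add_lt_add_right hb ?_
          exact (ENNReal.mul_lt_mul_iff_right hl (M.p_ne_top j l)).2 hlt
      _ = M.p j l + ∑' x, if x = l then 0 else M.p j x := by rw [mul_one]
      _ = ∑' x, M.p j x := (tsum_split (M.p j) l).symm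
      _ = 1 := M.row_sum j
  exact absurd h1 (lt_irrefl _)

lemma hp_one (hirr : ∀ i j, ∃ n, 0 < M.step n i j)
    (hrec : ∑' n, M.firstReturn 0 n = 1) (j : ℕ) : ∑' n, M.hitAt 0 n j = 1 := by
  have key : ∀ n i j, ∑' m, M.hitAt 0 m i = 1 → M.step n i j ≠ 0 →
      ∑' m, M.hitAt 0 m j = 1 := by
    intro n
    induction n with
    | zero =>
      intro i j hi hstep
      have : i = j := by
        by_contra hij
        exact hstep (by simp [step, if_neg hij])
      exact this ▸ hi
    | succ n ih =>
      intro i j hi hstep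
      have hex : ∃ l, M.p i l * M.step n l j ≠ 0 := by
        by_contra hall
        push_neg at hall
        exact hstep (by simpa [step, ENNReal.tsum_eq_zero] using hall)
      obtain ⟨l, hl⟩ := hex
      have hpl : M.p i l ≠ 0 := fun h => hl (by simp [h])
      have hsl : M.step n l j ≠ 0 := fun h => hl (by simp [h])
      have hrow : ∑' k, M.p i k * ∑' m, M.hitAt 0 m k = 1 := by
        by_cases hi0 : i = 0
        · exact hi0 ▸ M.return_eq hrec
        · exact (M.hit_harmonic i hi0) ▸ hi
      exact ih l j (M.hp_eq_one_of_row i hrow l hpl) hsl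
  obtain ⟨n, hn⟩ := hirr 0 j
  exact key n 0 j M.hp_zero (pos_iff_ne_zero.mp hn)

/-- tail of the hitting time of 0 : `tail0 n j = P_j(T_0 > n)` -/
noncomputable def tail0 (M : MarkovChain) : ℕ → ℕ → ℝ≥0∞
  | 0, j => if j = 0 then 0 else 1
  | (n+1), j => if j = 0 then 0 else ∑' k, M.p j k * M.tail0 n k

/-- taboo probability: `taboo n j = P_0(X_n = j, X_1,…,X_n ≠ 0)` -/
noncomputable def taboo (M : MarkovChain) : ℕ → ℕ → ℝ≥0∞
  | 0, j => if j = 0 then 1 else 0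
  | (n+1), j => if j = 0 then 0 else ∑' i, M.taboo n i * M.p i j

lemma tail0_add_sum : ∀ m, ∀ j,
    M.tail0 m j + ∑ n ∈ Finset.range (m+1), M.hitAt 0 n j = 1 := by
  intro m
  induction m with
  | zero =>
    intro j
    by_cases hj : j = 0 <;> simp [tail0, hitAt_zero, hj]
  | succ m ih =>
    intro j
    by_cases hj : j = 0
    · subst hj
      rw [Finset.sum_range_succ']
      simp only [hitAt_succ, if_pos rfl, hitAt_zero, if_pos rfl]
      simp [tail0]
    · rw [Finset.sum_range_succ']
      simp only [hitAt_succ, if_neg hj, hitAt_zero, if_neg hj, add_zero]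
      have hswap : ∑ n ∈ Finset.range (m+1), ∑' k, M.p j k * M.hitAt 0 n k
          = ∑' k, ∑ n ∈ Finset.range (m+1), M.p j k * M.hitAt 0 n k :=
        (Summable.tsum_finsetSum (fun _ _ => ENNReal.summable)).symm
      rw [hswap]
      show (M.tail0 (m+1) j) + _ = 1
      rw [show M.tail0 (m+1) j = ∑' k, M.p j k * M.tail0 m k by simp [tail0, hj]]
      rw [← ENNReal.tsum_add]
      calc ∑' k, (M.p j k * M.tail0 m k + ∑ n ∈ Finset.range (m+1), M.p j k * M.hitAt 0 n k)
          = ∑' k, M.p j k * (M.tail0 m k + ∑ n ∈ Finset.range (m+1), M.hitAt 0 n k) := by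
            refine tsum_congr fun k => ?_
            rw [mul_add, Finset.mul_sum]
        _ = ∑' k, M.p j k * 1 := by
            refine tsum_congr fun k => ?_; rw [ih k]
        _ = 1 := by simp [M.row_sum j]

lemma tail0_eq_tailsum (hirr : ∀ i j, ∃ n, 0 < M.step n i j)
    (hrec : ∑' n, M.firstReturn 0 n = 1) (m j : ℕ) :
    M.tail0 m j = ∑' s, M.hitAt 0 (s + (m+1)) j := by
  have hsum : ∑ n ∈ Finset.range (m+1), M.hitAt 0 n j
      + ∑' s, M.hitAt 0 (s + (m+1)) j = 1 := by
    rw [Summable.sum_add_tsum_nat_add' (k := m+1) ENNReal.summable]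
    exact M.hp_one hirr hrec j
  have h2 : ∑ n ∈ Finset.range (m+1), M.hitAt 0 n j + M.tail0 m j = 1 := by
    rw [add_comm]; exact M.tail0_add_sum m j
  have hfin : ∑ n ∈ Finset.range (m+1), M.hitAt 0 n j ≠ ⊤ :=
    ne_top_of_le_ne_top ENNReal.one_ne_top (M.hit_sum_le_one (m+1) j)
  exact (ENNReal.add_right_inj hfin).1 (h2.trans hsum.symm)

lemma tail0_total_le (hirr : ∀ i j, ∃ n, 0 < M.step n i j)
    (hrec : ∑' n, M.firstReturn 0 n = 1) (j : ℕ) :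
    ∑' m, M.tail0 m j ≤ ∑' n : ℕ, (n : ℝ≥0∞) * M.hitAt 0 n j := by
  have h1 : ∀ m, M.tail0 m j = ∑' n, if m + 1 ≤ n then M.hitAt 0 n j else 0 := by
    intro m
    rw [M.tail0_eq_tailsum hirr hrec m j]
    refine (tsum_congr fun s => ?_).trans
      (Function.Injective.tsum_eq (g := fun s => s + (m+1)) (add_left_injective (m+1))
      (f := fun n => if m + 1 ≤ n then M.hitAt 0 n j else 0) ?_)
    · exact (if_pos (by omega)).symm
    · intro n hn
      simp only [Function.mem_support] at hn
      have : m + 1 ≤ n := by by_contra h; exact hn (if_neg h)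
      exact ⟨n - (m+1), by simp; omega⟩
  calc ∑' m, M.tail0 m j = ∑' m, ∑' n, if m + 1 ≤ n then M.hitAt 0 n j else 0 :=
        tsum_congr h1
    _ = ∑' n, ∑' m, if m + 1 ≤ n then M.hitAt 0 n j else 0 := ENNReal.tsum_comm
    _ = ∑' n : ℕ, (n : ℝ≥0∞) * M.hitAt 0 n j := by
        refine tsum_congr fun n => ?_
        rw [tsum_eq_sum (s := Finset.range n) (by intro m hm; rw [Finset.mem_range] at hm; exact if_neg (by omega))]
        rw [Finset.sum_congr rfl (fun m hm => if_pos (by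
          rw [Finset.mem_range] at hm; omega))]
        simp [Finset.sum_const, nsmul_eq_mul]
    _ ≤ ∑' n : ℕ, (n : ℝ≥0∞) * M.hitAt 0 n j := le_rfl

lemma taboo_zero_state (a : ℕ) (ha : a ≠ 0) : M.taboo a 0 = 0 := by
  obtain ⟨b, rfl⟩ := Nat.exists_eq_succ_of_ne_zero ha
  simp [taboo]

lemma step_succ' (n i j : ℕ) : M.step (n+1) i j = ∑' k, M.step n i k * M.p k j := by
  induction n generalizing i j with
  | zero =>
    show (∑' k, M.p i k * M.step 0 k j) = _
    have e1 : ∀ b, b ≠ j → M.p i b * M.step 0 b j = 0 := by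
      intro b hb
      rw [show M.step 0 b j = 0 by simp [step, hb], mul_zero]
    have e2 : ∀ b, b ≠ i → M.step 0 i b * M.p b j = 0 := by
      intro b hb
      rw [show M.step 0 i b = 0 by simp [step, Ne.symm hb], zero_mul]
    rw [tsum_eq_single j e1, tsum_eq_single i e2]
    simp [step]
  | succ n ih =>
    show (∑' k, M.p i k * M.step (n+1) k j) = _
    calc ∑' k, M.p i k * M.step (n+1) k j
        = ∑' k, M.p i k * ∑' l, M.step n k l * M.p l j := by
          exact tsum_congr fun k => by rw [ih]
      _ = ∑' k, ∑' l, M.p i k * (M.step n k l * M.p l j) := by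
          exact tsum_congr fun k => ENNReal.tsum_mul_left.symm
      _ = ∑' l, ∑' k, M.p i k * (M.step n k l * M.p l j) := ENNReal.tsum_comm
      _ = ∑' l, M.step (n+1) i l * M.p l j := by
          refine tsum_congr fun l => ?_
          show _ = (∑' k, M.p i k * M.step n k l) * M.p l j
          rw [← ENNReal.tsum_mul_right]
          exact tsum_congr fun k => by ring

lemma taboo_pos (hirr : ∀ i j, ∃ n, 0 < M.step n i j) (j : ℕ) :
    ∃ a, M.taboo a j ≠ 0 := by
  have key : ∀ n j, M.step n 0 j ≠ 0 → ∃ a, M.taboo a j ≠ 0 := by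
    intro n
    induction n with
    | zero =>
      intro j hstep
      have : j = 0 := by
        by_contra hj
        exact hstep (by simp [step, if_neg (Ne.symm hj)])
      subst this
      exact ⟨0, by simp [taboo]⟩
    | succ n ih =>
      intro j hstep
      rw [step_succ'] at hstep
      have hex : ∃ k, M.step n 0 k * M.p k j ≠ 0 := by
        by_contra hall
        push_neg at hall
        exact hstep (by simpa [ENNReal.tsum_eq_zero] using hall)
      obtain ⟨k, hk⟩ := hex
      have hk1 : M.step n 0 k ≠ 0 := fun h => hk (by simp [h])
      have hk2 : M.p k j ≠ 0 := fun h => hk (by simp [h])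
      by_cases hj : j = 0
      · exact ⟨0, by simp [taboo, hj]⟩
      · obtain ⟨a, ha⟩ := ih k hk1
        refine ⟨a + 1, ?_⟩
        have : M.taboo a k * M.p k j ≤ M.taboo (a+1) j := by
          rw [show M.taboo (a+1) j = ∑' i, M.taboo a i * M.p i j by simp [taboo, hj]]
          exact ENNReal.le_tsum k
        intro h0
        rw [h0] at this
        exact (mul_ne_zero ha hk2) (le_antisymm (le_of_le_of_eq this rfl) zero_le)
  obtain ⟨n, hn⟩ := hirr 0 j
  exact key n j (pos_iff_ne_zero.mp hn)

/-- key inequality: taboo path to j followed by first hit of 0 is part of a first return -/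
lemma taboo_hit_le : ∀ a m, (∑' j, M.taboo (a+1) j * M.hitAt 0 (m+1) j)
    ≤ M.firstReturn 0 (a + m + 1) := by
  intro a
  induction a with
  | zero =>
    intro m
    calc ∑' j, M.taboo 1 j * M.hitAt 0 (m+1) j
        ≤ ∑' j, M.p 0 j * M.hitAt 0 (m+1) j := by
          refine ENNReal.tsum_le_tsum fun j => mul_le_mul_left ?_ _
          show M.taboo 1 j ≤ M.p 0 j
          by_cases hj : j = 0
          · simp [taboo, hj]
          · simp only [taboo, if_neg hj]
            rw [tsum_eq_single 0 (by intro b hb; simp [taboo, if_neg hb])]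
            simp [taboo]
      _ = M.firstReturn 0 (m+1) := rfl
      _ = M.firstReturn 0 (0 + m + 1) := by rw [Nat.zero_add]
  | succ a ih =>
    intro m
    have hstep : ∑' j, M.taboo (a+2) j * M.hitAt 0 (m+1) j
        ≤ ∑' i, M.taboo (a+1) i * M.hitAt 0 (m+2) i := by
      calc ∑' j, M.taboo (a+2) j * M.hitAt 0 (m+1) j
          = ∑' j, ∑' i, (if j = 0 then 0 else M.taboo (a+1) i * M.p i j * M.hitAt 0 (m+1) j) := by
            refine tsum_congr fun j => ?_
            by_cases hj : j = 0
            · simp [taboo, hj]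
            · simp only [taboo, if_neg hj]
              rw [← ENNReal.tsum_mul_right]
        _ = ∑' i, ∑' j, (if j = 0 then 0 else M.taboo (a+1) i * M.p i j * M.hitAt 0 (m+1) j) :=
            ENNReal.tsum_comm
        _ ≤ ∑' i, M.taboo (a+1) i * M.hitAt 0 (m+2) i := by
            refine ENNReal.tsum_le_tsum fun i => ?_
            by_cases hi : i = 0
            · subst hi
              rw [ENNReal.tsum_eq_zero.2 (fun j => ?_)]
              · exact zero_le
              · by_cases hj : j = 0
                · simp [hj]
                · simp [hj, M.taboo_zero_state (a+1) (by omega)]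
            · calc ∑' j, (if j = 0 then 0 else M.taboo (a+1) i * M.p i j * M.hitAt 0 (m+1) j)
                  ≤ ∑' j, M.taboo (a+1) i * (M.p i j * M.hitAt 0 (m+1) j) := by
                    refine ENNReal.tsum_le_tsum fun j => ?_
                    split
                    · exact zero_le
                    · rw [mul_assoc]
                _ = M.taboo (a+1) i * ∑' j, M.p i j * M.hitAt 0 (m+1) j :=
                    ENNReal.tsum_mul_left
                _ = M.taboo (a+1) i * M.hitAt 0 (m+2) i := by
                    rw [hitAt_succ, if_neg hi]
    refine hstep.trans ?_
    have := ih (m+1)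
    calc ∑' i, M.taboo (a+1) i * M.hitAt 0 (m+2) i
        ≤ M.firstReturn 0 (a + (m+1) + 1) := ih (m+1)
      _ = M.firstReturn 0 (a + 1 + m + 1) := by ring_nf

/-- expected hitting time of 0 (as sum of times weighted by first-hit probs) is finite -/
lemma exp_hit_lt_top (hirr : ∀ i j, ∃ n, 0 < M.step n i j)
    (hexp : ∑' n : ℕ, ((n : ℝ≥0∞) + 1) * M.firstReturn 0 n < ⊤) (j : ℕ) :
    ∑' n : ℕ, (n : ℝ≥0∞) * M.hitAt 0 n j < ⊤ := by
  have hE : ∑' n : ℕ, (n : ℝ≥0∞) * M.hitAt 0 n j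
      = ∑' m : ℕ, ((m : ℝ≥0∞) + 1) * M.hitAt 0 (m+1) j := by
    rw [tsum_eq_zero_add' ENNReal.summable]
    simp only [Nat.cast_zero, zero_mul, zero_add]
    exact tsum_congr fun m => by push_cast; ring_nf
  rw [hE]
  by_cases hj : j = 0
  · subst hj
    have : ∀ m : ℕ, ((m : ℝ≥0∞) + 1) * M.hitAt 0 (m+1) 0 = 0 := by
      intro m; simp [hitAt_succ]
    rw [tsum_congr this]
    simp
  · obtain ⟨a, ha⟩ := M.taboo_pos hirr j
    have ha' : a ≠ 0 := by
      intro h; subst h; exact ha (by simp [taboo, hj])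
    obtain ⟨b, rfl⟩ := Nat.exists_eq_succ_of_ne_zero ha'
    have key : ∀ m, M.taboo (b+1) j * M.hitAt 0 (m+1) j ≤ M.firstReturn 0 (b + m + 1) :=
      fun m => le_trans (ENNReal.le_tsum j) (M.taboo_hit_le b m)
    have hmul : M.taboo (b+1) j * ∑' m : ℕ, ((m : ℝ≥0∞) + 1) * M.hitAt 0 (m+1) j
        ≤ ∑' n : ℕ, ((n : ℝ≥0∞) + 1) * M.firstReturn 0 n := by
      rw [← ENNReal.tsum_mul_left]
      calc ∑' m : ℕ, M.taboo (b+1) j * (((m : ℝ≥0∞) + 1) * M.hitAt 0 (m+1) j)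
          ≤ ∑' m : ℕ, ((m : ℝ≥0∞) + 1) * M.firstReturn 0 (b + m + 1) := by
            refine ENNReal.tsum_le_tsum fun m => ?_
            calc M.taboo (b+1) j * (((m : ℝ≥0∞) + 1) * M.hitAt 0 (m+1) j)
                = ((m : ℝ≥0∞) + 1) * (M.taboo (b+1) j * M.hitAt 0 (m+1) j) := by ring
              _ ≤ ((m : ℝ≥0∞) + 1) * M.firstReturn 0 (b + m + 1) :=
                  mul_le_mul_right (key m) _
        _ ≤ ∑' n : ℕ, ((n : ℝ≥0∞) + 1) * M.firstReturn 0 n := by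
            refine Summable.tsum_le_tsum_of_inj (fun m => b + m + 1)
              (fun x y hxy => by simp only [] at hxy; omega) (fun c _ => zero_le)
              (fun m => mul_le_mul_left ?_ _) ENNReal.summable ENNReal.summable
            push_cast
            calc (m : ℝ≥0∞) + 1 ≤ ((m : ℝ≥0∞) + 1) + ((b : ℝ≥0∞) + 1) := le_self_add
              _ = (b:ℝ≥0∞) + (m : ℝ≥0∞) + 1 + 1 := by ring
    by_contra htop
    push_neg at htop
    have : M.taboo (b+1) j * ∑' m : ℕ, ((m : ℝ≥0∞) + 1) * M.hitAt 0 (m+1) j = ⊤ := by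
      rw [top_le_iff.1 htop]
      exact ENNReal.mul_top ha
    rw [this] at hmul
    exact absurd (top_le_iff.1 hmul) hexp.ne

/-- tail of the hitting time of `{0,…,c-1}` -/
noncomputable def tailB (M : MarkovChain) (c : ℕ) : ℕ → ℕ → ℝ≥0∞
  | 0, j => if j < c then 0 else 1
  | (n+1), j => if j < c then 0 else ∑' k, M.p j k * M.tailB c n k

/-- expected value of the chain stopped upon entering `{0,…,c-1}` -/
noncomputable def stopVal (M : MarkovChain) (c : ℕ) : ℕ → ℕ → ℝ≥0∞
  | 0, j => j
  | (n+1), j => if j < c then j else ∑' k, M.p j k * M.stopVal c n k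

lemma tailB_le_tail0 (c : ℕ) (hc : 1 ≤ c) : ∀ m j, M.tailB c m j ≤ M.tail0 m j := by
  intro m
  induction m with
  | zero =>
    intro j
    by_cases hj : j < c
    · simp [tailB, hj]
    · have : j ≠ 0 := by omega
      simp [tailB, tail0, hj, this]
  | succ m ih =>
    intro j
    by_cases hj : j < c
    · simp [tailB, hj]
    · have hj0 : j ≠ 0 := by omega
      rw [show M.tailB c (m+1) j = ∑' k, M.p j k * M.tailB c m k by simp [tailB, hj],
          show M.tail0 (m+1) j = ∑' k, M.p j k * M.tail0 m k by simp [tail0, hj0]]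
      exact ENNReal.tsum_le_tsum fun k => mul_le_mul_right (ih k) _

lemma tailB_eq_one (c k : ℕ) (hdb : ∀ i j, j + k < i → M.p i j = 0) :
    ∀ m j, c + k * m ≤ j → M.tailB c m j = 1 := by
  intro m
  induction m with
  | zero =>
    intro j hj
    have : ¬ j < c := by omega
    simp [tailB, this]
  | succ m ih =>
    intro j hj
    have hjc : ¬ j < c := by nlinarith [Nat.mul_le_mul_left k (Nat.le_succ m)]
    rw [show M.tailB c (m+1) j = ∑' l, M.p j l * M.tailB c m l by simp [tailB, hjc]]
    have : ∀ l, M.p j l * M.tailB c m l = M.p j l := by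
      intro l
      by_cases hl : l + k < j
      · rw [hdb j l hl, zero_mul]
      · rw [ih l (by nlinarith [Nat.mul_le_mul_left k (Nat.le_succ m)]), mul_one]
    rw [tsum_congr this, M.row_sum j]

lemma tailB_start (c k : ℕ) (hk : 1 ≤ k) (hc : 1 ≤ c)
    (hdb : ∀ i j, j + k < i → M.p i j = 0) (j : ℕ) :
    (j : ℝ≥0∞) ≤ (↑(c-1) : ℝ≥0∞) + k * ∑' m, M.tailB c m j := by
  by_cases hj : j < c
  · calc (j : ℝ≥0∞) ≤ (↑(c-1) : ℝ≥0∞) := Nat.cast_le.mpr (by omega)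
      _ ≤ _ := le_self_add
  · push_neg at hj
    set d := j - (c - 1) with hd
    have hd1 : 1 ≤ d := by omega
    set q := (d - 1) / k + 1 with hq
    have hkq : d ≤ k * q := by
      have h1 := Nat.div_add_mod (d-1) k
      have h2 := Nat.mod_lt (d-1) (show 0 < k by omega)
      have : k * q = k * ((d-1)/k) + k := by rw [hq]; ring
      omega
    have hone : ∀ m, m < q → M.tailB c m j = 1 := by
      intro m hm
      refine M.tailB_eq_one c k hdb m j ?_
      have h3 : k * m ≤ k * ((d-1)/k) := Nat.mul_le_mul_left k (by omega)
      have h4 : k * ((d-1)/k) ≤ d - 1 := by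
        have := Nat.div_add_mod (d-1) k; omega
      omega
    have hsum : (q : ℝ≥0∞) ≤ ∑' m, M.tailB c m j := by
      calc (q : ℝ≥0∞) = ∑ m ∈ Finset.range q, M.tailB c m j := by
            rw [Finset.sum_congr rfl (fun m hm => hone m (Finset.mem_range.1 hm))]
            simp
        _ ≤ ∑' m, M.tailB c m j := ENNReal.sum_le_tsum _
    calc (j : ℝ≥0∞) ≤ (↑(c - 1 + k * q) : ℝ≥0∞) := Nat.cast_le.mpr (by omega)
      _ = (↑(c-1) : ℝ≥0∞) + (k : ℝ≥0∞) * (q : ℝ≥0∞) := by push_cast; ring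
      _ ≤ (↑(c-1) : ℝ≥0∞) + k * ∑' m, M.tailB c m j := by
          exact add_le_add_right (mul_le_mul_right hsum _) _

lemma stopVal_lower (c : ℕ) (hge : ∀ j, c ≤ j → (j : ℝ≥0∞) ≤ ∑' l, M.p j l * l) :
    ∀ n (j : ℕ), (j : ℝ≥0∞) ≤ M.stopVal c n j := by
  intro n
  induction n with
  | zero => intro j; exact le_of_eq rfl
  | succ n ih =>
    intro j
    by_cases hj : j < c
    · simp [stopVal, hj]
    · rw [show M.stopVal c (n+1) j = ∑' l, M.p j l * M.stopVal c n l by simp [stopVal, hj]]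
      calc (j : ℝ≥0∞) ≤ ∑' l, M.p j l * l := hge j (by omega)
        _ ≤ ∑' l, M.p j l * M.stopVal c n l :=
            ENNReal.tsum_le_tsum fun l => mul_le_mul_right (ih l) _

lemma stopVal_upper (c k : ℕ) (hk : 1 ≤ k) (hc : 1 ≤ c)
    (hdb : ∀ i j, j + k < i → M.p i j = 0) :
    ∀ n j, M.stopVal c n j ≤ (↑(c-1) : ℝ≥0∞) + k * ∑' m, M.tailB c (n + m) j := by
  intro n
  induction n with
  | zero =>
    intro j
    simpa [stopVal] using M.tailB_start c k hk hc hdb j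
  | succ n ih =>
    intro j
    by_cases hj : j < c
    · rw [show M.stopVal c (n+1) j = j by simp [stopVal, hj]]
      calc (j : ℝ≥0∞) ≤ (↑(c-1) : ℝ≥0∞) := Nat.cast_le.mpr (by omega)
        _ ≤ _ := le_self_add
    · rw [show M.stopVal c (n+1) j = ∑' l, M.p j l * M.stopVal c n l by simp [stopVal, hj]]
      calc ∑' l, M.p j l * M.stopVal c n l
          ≤ ∑' l, M.p j l * ((↑(c-1) : ℝ≥0∞) + k * ∑' m, M.tailB c (n + m) l) :=
            ENNReal.tsum_le_tsum fun l => mul_le_mul_right (ih l) _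
        _ = (∑' l, M.p j l * (↑(c-1) : ℝ≥0∞))
            + ∑' l, M.p j l * (k * ∑' m, M.tailB c (n + m) l) := by
            rw [← ENNReal.tsum_add]
            exact tsum_congr fun l => mul_add _ _ _
        _ = (↑(c-1) : ℝ≥0∞) + k * ∑' l, M.p j l * ∑' m, M.tailB c (n + m) l := by
            rw [ENNReal.tsum_mul_right, M.row_sum j, one_mul]
            congr 1
            rw [← ENNReal.tsum_mul_left]
            exact tsum_congr fun l => by ring
        _ = (↑(c-1) : ℝ≥0∞) + k * ∑' m, M.tailB c (n + 1 + m) j := by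
            congr 1
            have h1 : ∑' l, M.p j l * ∑' m, M.tailB c (n + m) l
                = ∑' m, ∑' l, M.p j l * M.tailB c (n + m) l := by
              rw [show (∑' l, M.p j l * ∑' m, M.tailB c (n + m) l)
                  = ∑' l, ∑' m, M.p j l * M.tailB c (n + m) l from
                tsum_congr fun l => ENNReal.tsum_mul_left.symm]
              exact ENNReal.tsum_comm
            rw [h1]
            congr 1
            refine tsum_congr fun m => ?_
            rw [show n + 1 + m = (n + m) + 1 by omega]
            rw [show M.tailB c (n + m + 1) j = ∑' l, M.p j l * M.tailB c (n+m) l by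
              simp [tailB, hj]]

/-- the drift condition in `ℝ≥0∞` form -/
lemma drift_le (j : ℕ) (hfin : Summable fun l => (M.p j l).toReal * ((l : ℝ) - j))
    (hpos : 0 ≤ ∑' l, (M.p j l).toReal * ((l : ℝ) - j)) :
    (j : ℝ≥0∞) ≤ ∑' l, M.p j l * l := by
  have hne : ∀ l, M.p j l ≠ ⊤ := M.p_ne_top j
  have hf : Summable fun l => (M.p j l).toReal :=
    ENNReal.summable_toReal (by rw [M.row_sum j]; exact ENNReal.one_ne_top)
  have hfsum : ∑' l, (M.p j l).toReal = 1 := by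
    rw [← ENNReal.tsum_toReal_eq hne, M.row_sum j, ENNReal.toReal_one]
  have hfj : Summable fun l => (M.p j l).toReal * (j : ℝ) := hf.mul_right _
  have hh : Summable fun l => (M.p j l).toReal * (l : ℝ) := by
    have : (fun l => (M.p j l).toReal * (l : ℝ))
        = fun l => (M.p j l).toReal * ((l : ℝ) - j) + (M.p j l).toReal * (j : ℝ) := by
      funext l; ring
    rw [this]
    exact hfin.add hfj
  have hhsum : (j : ℝ) ≤ ∑' l, (M.p j l).toReal * (l : ℝ) := by
    have heq : ∑' l, (M.p j l).toReal * (l : ℝ)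
        = (∑' l, (M.p j l).toReal * ((l : ℝ) - j)) + (∑' l, (M.p j l).toReal * (j : ℝ)) := by
      rw [← Summable.tsum_add hfin hfj]
      exact tsum_congr fun l => by ring
    rw [heq, tsum_mul_right, hfsum, one_mul]
    linarith
  calc (j : ℝ≥0∞) = ENNReal.ofReal (j : ℝ) := by
        rw [ENNReal.ofReal_natCast]
    _ ≤ ENNReal.ofReal (∑' l, (M.p j l).toReal * (l : ℝ)) :=
        ENNReal.ofReal_le_ofReal hhsum
    _ = ∑' l, ENNReal.ofReal ((M.p j l).toReal * (l : ℝ)) :=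
        ENNReal.ofReal_tsum_of_nonneg
          (fun l => mul_nonneg ENNReal.toReal_nonneg (Nat.cast_nonneg l)) hh
    _ = ∑' l, M.p j l * l := by
        refine tsum_congr fun l => ?_
        rw [ENNReal.ofReal_mul ENNReal.toReal_nonneg, ENNReal.ofReal_toReal (hne l),
            ENNReal.ofReal_natCast]

end MarkovChain

/-- Kaplan's non-ergodicity criterion: a downward uniformly
bounded irreducible chain with finite, eventually nonnegative mean drifts is
not positive recurrent. -/
theorem stmt17 (M : MarkovChain) (hirr : M.Irreducible) (k : ℕ)
    (hdb : M.DownwardBounded k)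
    (hfin : ∀ i, M.DriftFinite i)
    (N : ℕ) (hdrift : ∀ i, N ≤ i → 0 ≤ M.drift i) :
    ¬ M.PositiveRecurrent := by
  rintro ⟨hrec, hexp⟩
  set c := max N 1 with hc
  have hc1 : 1 ≤ c := le_max_right _ _
  set k' := k + 1 with hk'
  have hk'1 : 1 ≤ k' := by omega
  have hdb' : ∀ i j, j + k' < i → M.p i j = 0 := fun i j h => hdb i j (by omega)
  have hge : ∀ j, c ≤ j → (j : ℝ≥0∞) ≤ ∑' l, M.p j l * l := by
    intro j hj
    exact M.drift_le j (hfin j) (hdrift j (le_trans (le_max_left N 1) hj))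
  have hfin2 : ∑' m, M.tailB c m c ≠ ⊤ := by
    have h1 : ∑' m, M.tailB c m c ≤ ∑' m, M.tail0 m c :=
      ENNReal.tsum_le_tsum (fun m => M.tailB_le_tail0 c hc1 m c)
    have h2 := M.tail0_total_le hirr (hrec 0) c
    have h3 := M.exp_hit_lt_top hirr (hexp 0) c
    exact ne_top_of_le_ne_top h3.ne (h1.trans h2)
  have htend := ENNReal.tendsto_sum_nat_add (fun m => M.tailB c m c) hfin2
  have htend2 : Tendsto (fun n => (k' : ℝ≥0∞) * ∑' m, M.tailB c (m + n) c) atTop (nhds 0) := by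
    have := ENNReal.Tendsto.const_mul (a := (k' : ℝ≥0∞)) htend
      (Or.inr (ENNReal.natCast_ne_top k'))
    simpa using this
  have hev : ∀ᶠ n in atTop, (k' : ℝ≥0∞) * ∑' m, M.tailB c (m + n) c < 1 :=
    htend2.eventually_lt_const zero_lt_one
  obtain ⟨n, hn⟩ := hev.exists
  have hlow := M.stopVal_lower c hge n c
  have hup := M.stopVal_upper c k' hk'1 hc1 hdb' n c
  have hflip : ∑' m, M.tailB c (n + m) c = ∑' m, M.tailB c (m + n) c :=
    tsum_congr fun m => by rw [add_comm]
  have hcontra : (c : ℝ≥0∞) < (c : ℝ≥0∞) := by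
    calc (c : ℝ≥0∞) ≤ M.stopVal c n c := hlow
      _ ≤ (↑(c-1) : ℝ≥0∞) + k' * ∑' m, M.tailB c (n + m) c := hup
      _ < (↑(c-1) : ℝ≥0∞) + 1 :=
          ENNReal.add_lt_add_left (ENNReal.natCast_ne_top _) (by rw [hflip]; exact hn)
      _ = ((c - 1 + 1 : ℕ) : ℝ≥0∞) := by push_cast; ring
      _ = (c : ℝ≥0∞) := by rw [show c - 1 + 1 = c by omega]
  exact absurd hcontra (lt_irrefl _)
end

section
/- The chain with p_{0i} = 2^{-i} for i >= 1 and p_{i0} = p_{i,3i} = 1/2 for i >= 1 is positive recurrent, while its mean drift gamma_i = i/2 tends to infinity. -/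
open scoped ENNReal BigOperators
open Filter

noncomputable def uu : ℝ≥0∞ := 2⁻¹

lemma uu_ne_top : uu ≠ ⊤ := by simp [uu]
lemma uu_ne_zero : uu ≠ 0 := by simp [uu]
lemma uu_le_one : uu ≤ 1 := by
  rw [uu]; exact ENNReal.inv_le_one.mpr one_le_two
lemma two_uu : 2 * uu = 1 := ENNReal.mul_inv_cancel (by norm_num) (by norm_num)
lemma uu_add_uu : uu + uu = 1 := by rw [← two_mul, two_uu]

lemma inv_identity {r : ℝ≥0∞} (h1 : r ≤ 1) (h0 : r ≠ 0) : (1 - r) * r⁻¹ + 1 = r⁻¹ := by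
  nth_rewrite 2 [← ENNReal.mul_inv_cancel h0 (ne_top_of_le_ne_top ENNReal.one_ne_top h1)]
  rw [← add_mul, tsub_add_cancel_of_le h1, one_mul]

lemma tsum_pair {f : ℕ → ℝ≥0∞} {a b : ℕ} (hab : a ≠ b)
    (h : ∀ c, c ≠ a → c ≠ b → f c = 0) : ∑' c, f c = f a + f b := by
  rw [tsum_eq_sum (s := {a, b}) (by
    intro c hc
    simp only [Finset.mem_insert, Finset.mem_singleton] at hc
    push_neg at hc
    exact h c hc.1 hc.2)]
  exact Finset.sum_pair hab

lemma geom_tsum : ∑' t : ℕ, uu ^ t = 2 := by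
  rw [uu, ENNReal.tsum_geometric]
  simp [ENNReal.one_sub_inv_two]

lemma geom_tail : ∑' t : ℕ, uu ^ (t + 1) = 1 := by
  have : ∀ t : ℕ, uu ^ (t + 1) = uu ^ t * uu := fun t => pow_succ uu t
  rw [tsum_congr this, ENNReal.tsum_mul_right, geom_tsum, two_uu]

lemma geom_partial (m : ℕ) : (∑ t ∈ Finset.range m, uu ^ (t + 1)) + uu ^ m = 1 := by
  induction m with
  | zero => simp
  | succ m ih =>
    have key : uu ^ (m + 1) + uu ^ (m + 1) = uu ^ m := by
      rw [pow_succ, ← mul_add, uu_add_uu, mul_one]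
    rw [Finset.sum_range_succ, add_assoc, key, ih]

lemma nat_geom_partial (N : ℕ) :
    (∑ n ∈ Finset.range N, ((n : ℝ≥0∞) + 1) * uu ^ n) + (2 * N + 4) * uu ^ N = 4 := by
  induction N with
  | zero => norm_num
  | succ N ih =>
    have key : ((N : ℝ≥0∞) + 1) * uu ^ N + (2 * ((N : ℕ) + 1 : ℕ) + 4) * uu ^ (N + 1)
        = (2 * N + 4) * uu ^ N := by
      have h2 : ((2 * ((N : ℕ) + 1 : ℕ) : ℝ≥0∞) + 4) * uu ^ (N + 1)
          = ((N : ℝ≥0∞) + 3) * uu ^ N := by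
        rw [pow_succ]
        have : ((2 * ((N : ℕ) + 1 : ℕ) : ℝ≥0∞) + 4) = ((N : ℝ≥0∞) + 3) * 2 := by
          push_cast; ring
        rw [this]
        calc ((N : ℝ≥0∞) + 3) * 2 * (uu ^ N * uu) = ((N : ℝ≥0∞) + 3) * (2 * uu) * uu ^ N := by
              ring
          _ = ((N : ℝ≥0∞) + 3) * uu ^ N := by rw [two_uu, mul_one]
      rw [h2, ← add_mul]
      congr 1
      push_cast; ring
    rw [Finset.sum_range_succ, add_assoc]
    push_cast at key ⊢
    rw [key, ih]

lemma nat_geom_tsum : ∑' n : ℕ, ((n : ℝ≥0∞) + 1) * uu ^ n ≤ 4 := by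
  apply Summable.tsum_le_of_sum_range_le ENNReal.summable
  intro N
  calc ∑ n ∈ Finset.range N, ((n : ℝ≥0∞) + 1) * uu ^ n
      ≤ _ + (2 * N + 4) * uu ^ N := le_add_right le_rfl
    _ = 4 := nat_geom_partial N

lemma succ_term_le (t : ℕ) : ((t : ℝ≥0∞) + 2) * uu ^ (t + 1) ≤ ((t : ℝ≥0∞) + 1) * uu ^ t := by
  have h : ((t : ℝ≥0∞) + 2) * uu ≤ (t : ℝ≥0∞) + 1 := by
    calc ((t : ℝ≥0∞) + 2) * uu ≤ (2 * ((t : ℝ≥0∞) + 1)) * uu := by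
          apply mul_le_mul_left
          rw [mul_add, two_mul, mul_one]
          exact add_le_add le_add_self le_rfl
      _ = ((t : ℝ≥0∞) + 1) * (2 * uu) := by ring
      _ = (t : ℝ≥0∞) + 1 := by rw [two_uu, mul_one]
  calc ((t : ℝ≥0∞) + 2) * uu ^ (t + 1) = (((t : ℝ≥0∞) + 2) * uu) * uu ^ t := by
        rw [pow_succ]; ring
    _ ≤ ((t : ℝ≥0∞) + 1) * uu ^ t := mul_le_mul_left h _

lemma nat_geom_tsum' : ∑' t : ℕ, ((t : ℝ≥0∞) + 2) * uu ^ (t + 1) ≤ 4 :=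
  le_trans (Summable.tsum_le_tsum (fun t => succ_term_le t) ENNReal.summable ENNReal.summable) nat_geom_tsum

lemma nat_geom_tsum'' : ∑' t : ℕ, ((t : ℝ≥0∞) + 1) * uu ^ (t + 1) ≤ 4 := by
  refine le_trans (Summable.tsum_le_tsum (fun t => ?_) ENNReal.summable ENNReal.summable) nat_geom_tsum'
  exact mul_le_mul_left (by exact add_le_add le_rfl one_le_two) _

/-- Triangle reindexing for tsums. -/
lemma tsum_tri (F : ℕ → ℕ → ℝ≥0∞) :
    ∑' n : ℕ, ∑ t ∈ Finset.range n, F t (n - 1 - t) = ∑' t : ℕ, ∑' s : ℕ, F t s := by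
  have h1 : ∀ n : ℕ, ∑ t ∈ Finset.range n, F t (n - 1 - t)
      = ∑' t : ℕ, if t < n then F t (n - 1 - t) else 0 := by
    intro n
    rw [tsum_eq_sum (s := Finset.range n) (by
      intro t ht; rw [if_neg (by simpa using ht)])]
    exact (Finset.sum_congr rfl (fun t ht => by rw [if_pos (by simpa using ht)])).symm
  rw [tsum_congr h1]
  set g : ℕ × ℕ → ℝ≥0∞ := fun q => if q.2 < q.1 then F q.2 (q.1 - 1 - q.2) else 0 with hg
  have h2 : ∑' n : ℕ, ∑' t : ℕ, (if t < n then F t (n - 1 - t) else 0) = ∑' q : ℕ × ℕ, g q :=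
    (ENNReal.tsum_prod (f := fun n t => if t < n then F t (n - 1 - t) else 0)).symm
  rw [h2]
  have h3 : ∑' p : ℕ × ℕ, F p.1 p.2 = ∑' t : ℕ, ∑' s : ℕ, F t s :=
    ENNReal.tsum_prod (f := fun t s => F t s)
  rw [← h3]
  have hinj : Function.Injective (fun p : ℕ × ℕ => ((p.1 + p.2 + 1, p.1) : ℕ × ℕ)) := by
    intro p q h
    simp only [Prod.mk.injEq] at h
    obtain ⟨h1', h2'⟩ := h
    exact Prod.ext h2' (by omega)
  have hsupp : Function.support g ⊆ Set.range (fun p : ℕ × ℕ => ((p.1 + p.2 + 1, p.1) : ℕ × ℕ)) := by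
    intro q hq
    have : q.2 < q.1 := by
      by_contra hc
      apply hq
      simp only [hg, if_neg hc]
    exact ⟨(q.2, q.1 - 1 - q.2), by simp only; exact Prod.ext (by omega) rfl⟩
  have := hinj.tsum_eq hsupp
  rw [← this]
  apply tsum_congr
  intro p
  simp only [hg]
  rw [if_pos (by omega)]
  congr 1
  omega

/-- Triangle sum dominated by grid sum. -/
lemma sum_tri_le (G : ℕ → ℕ → ℝ≥0∞) (N : ℕ) :
    ∑ n ∈ Finset.range N, ∑ t ∈ Finset.range n, G t (n - 1 - t)
      ≤ ∑ t ∈ Finset.range N, ∑ s ∈ Finset.range N, G t s := by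
  rw [← Finset.sum_sigma (Finset.range N) (fun n => Finset.range n)
    (fun p => G p.2 (p.1 - 1 - p.2))]
  rw [← Finset.sum_product']
  set φ : (Σ _ : ℕ, ℕ) → ℕ × ℕ := fun p => (p.2, p.1 - 1 - p.2) with hφ
  have hinj : Set.InjOn φ ((Finset.range N).sigma (fun n => Finset.range n)) := by
    intro p hp q hq h
    simp only [Finset.coe_sigma, Set.mem_sigma_iff, Finset.mem_coe, Finset.mem_range] at hp hq
    simp only [hφ, Prod.mk.injEq] at h
    obtain ⟨h1, h2⟩ := h
    exact Sigma.ext (by omega) (by rw [heq_iff_eq]; omega)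
  calc ∑ p ∈ (Finset.range N).sigma (fun n => Finset.range n), G p.2 (p.1 - 1 - p.2)
      = ∑ q ∈ ((Finset.range N).sigma (fun n => Finset.range n)).image φ, G q.1 q.2 := by
        rw [Finset.sum_image (fun p hp q hq h => hinj hp hq h)]
    _ ≤ ∑ q ∈ Finset.range N ×ˢ Finset.range N, G q.1 q.2 := by
        apply Finset.sum_le_sum_of_subset
        intro q hq
        simp only [Finset.mem_image, Finset.mem_sigma, Finset.mem_range] at hq
        obtain ⟨p, ⟨hp1, hp2⟩, rfl⟩ := hq
        simp only [Finset.mem_product, Finset.mem_range, hφ]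
        omega
section Chain
variable (M : MarkovChain)

lemma p0_eq (h0 : ∀ j : ℕ, M.p 0 j = if j = 0 then 0 else (2 : ℝ≥0∞)⁻¹ ^ j) (j : ℕ) :
    M.p 0 j = if j = 0 then 0 else uu ^ j := h0 j

lemma p0_0 (h0 : ∀ j : ℕ, M.p 0 j = if j = 0 then 0 else (2 : ℝ≥0∞)⁻¹ ^ j) :
    M.p 0 0 = 0 := by rw [h0]; simp

/-- One-step unfolding of `hitAt` from a positive state. -/
lemma hit_succ_pos
    (hi : ∀ i j : ℕ, 1 ≤ i →
      M.p i j = if j = 0 then (2 : ℝ≥0∞)⁻¹ else if j = 3 * i then (2 : ℝ≥0∞)⁻¹ else 0)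
    (i j n : ℕ) (hj : 1 ≤ j) :
    M.hitAt i (n+1) j = if j = i then 0
      else uu * M.hitAt i n 0 + uu * M.hitAt i n (3 * j) := by
  show (if j = i then 0 else ∑' k, M.p j k * M.hitAt i n k) = _
  by_cases hji : j = i
  · rw [if_pos hji, if_pos hji]
  · rw [if_neg hji, if_neg hji]
    rw [tsum_pair (f := fun k => M.p j k * M.hitAt i n k) (a := 0) (b := 3 * j)
      (by omega) (by
        intro c hc0 hc3
        show M.p j c * M.hitAt i n c = 0
        rw [hi j c hj, if_neg hc0, if_neg hc3, zero_mul])]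
    rw [hi j 0 hj, hi j (3 * j) hj]
    rw [if_pos rfl, if_neg (by omega), if_pos rfl]
    rfl

lemma hit0_succ (i n : ℕ) (hi1 : 1 ≤ i) :
    M.hitAt i (n+1) 0 = ∑' k, M.p 0 k * M.hitAt i n k := by
  show (if 0 = i then 0 else ∑' k, M.p 0 k * M.hitAt i n k) = _
  rw [if_neg (by omega)]

lemma hit_zero (i j : ℕ) : M.hitAt i 0 j = if j = i then 1 else 0 := rfl

end Chain

/-- Starting-from-`0` first-hit probabilities. -/
noncomputable def MarkovChain.aa (M : MarkovChain) (i n : ℕ) : ℝ≥0∞ := M.hitAt i n 0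

section Chain
variable (M : MarkovChain)

lemma aa_zero (i : ℕ) (hi1 : 1 ≤ i) : M.aa i 0 = 0 := by
  show (if 0 = i then (1:ℝ≥0∞) else 0) = 0
  rw [if_neg (by omega)]

/-- General fact: total first-hit probability is at most one. -/
lemma hit_tsum_le_one (i j : ℕ) : ∑' n, M.hitAt i n j ≤ 1 := by
  apply Summable.tsum_le_of_sum_range_le ENNReal.summable
  intro N
  induction N generalizing j with
  | zero => simp
  | succ N ih =>
    rw [Finset.sum_range_succ']
    by_cases hj : j = i
    · have h1 : ∀ n ∈ Finset.range N, M.hitAt i (n+1) j = 0 := by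
        intro n _
        show (if j = i then 0 else _) = 0
        rw [if_pos hj]
      rw [Finset.sum_congr rfl h1, hit_zero, if_pos hj]
      simp
    · have h1 : ∀ n ∈ Finset.range N, M.hitAt i (n+1) j = ∑' k, M.p j k * M.hitAt i n k := by
        intro n _
        show (if j = i then 0 else _) = _
        rw [if_neg hj]
      rw [Finset.sum_congr rfl h1, hit_zero, if_neg hj, add_zero]
      rw [← Summable.tsum_finsetSum (fun _ _ => ENNReal.summable)]
      calc ∑' k, ∑ n ∈ Finset.range N, M.p j k * M.hitAt i n k
          = ∑' k, M.p j k * ∑ n ∈ Finset.range N, M.hitAt i n k := by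
            apply tsum_congr; intro k; rw [Finset.mul_sum]
        _ ≤ ∑' k, M.p j k * 1 :=
            Summable.tsum_le_tsum (fun k => mul_le_mul_right (ih k) _) ENNReal.summable ENNReal.summable
        _ = 1 := by simp [M.row_sum j]

/-- The explicit formula for first-hit probabilities from a positive state. -/
lemma hform
    (hi : ∀ i j : ℕ, 1 ≤ i →
      M.p i j = if j = 0 then (2 : ℝ≥0∞)⁻¹ else if j = 3 * i then (2 : ℝ≥0∞)⁻¹ else 0)
    (i : ℕ) (hi1 : 1 ≤ i) :
    ∀ n k, 1 ≤ k → M.hitAt i n k = (if 3 ^ n * k = i then uu ^ n else 0) +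
      ∑ t ∈ Finset.range n,
        (if ∀ s ≤ t, 3 ^ s * k ≠ i then uu ^ (t+1) * M.aa i (n - 1 - t) else 0) := by
  intro n
  induction n with
  | zero =>
    intro k hk
    rw [hit_zero]
    simp only [pow_zero, one_mul, Finset.range_zero, Finset.sum_empty, add_zero]
  | succ n ih =>
    intro k hk
    rw [hit_succ_pos M hi i k n hk]
    by_cases hki : k = i
    · rw [if_pos hki]
      have hfirst : ¬ (3 ^ (n+1) * k = i) := by
        subst hki
        have h3 : 3 ≤ 3 ^ (n+1) := by
          calc 3 = 3 ^ 1 := by norm_num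
            _ ≤ 3 ^ (n+1) := Nat.pow_le_pow_right (by norm_num) (by omega)
        nlinarith
      rw [if_neg hfirst, zero_add]
      rw [Finset.sum_eq_zero]
      intro t _
      rw [if_neg]
      push_neg
      exact ⟨0, Nat.zero_le t, by simpa using hki⟩
    · rw [if_neg hki, ih (3 * k) (by omega)]
      rw [Finset.sum_range_succ']
      have hf0 : (if ∀ s ≤ 0, 3 ^ s * k ≠ i then uu ^ (0+1) * M.aa i (n + 1 - 1 - 0) else 0)
          = uu * M.aa i n := by
        rw [if_pos (by intro s hs; interval_cases s; simpa using hki)]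
        norm_num
      rw [hf0]
      have hcond : (3 ^ n * (3 * k) = i) ↔ (3 ^ (n+1) * k = i) := by
        constructor <;> intro h <;> rw [← h] <;> ring
      have hfirst : uu * ((if 3 ^ n * (3 * k) = i then uu ^ n else 0)) =
          (if 3 ^ (n+1) * k = i then uu ^ (n+1) else 0) := by
        rw [mul_ite, mul_zero]
        refine if_congr hcond ?_ rfl
        rw [pow_succ]; ring
      have hterm : ∀ t, uu * (if ∀ s ≤ t, 3 ^ s * (3 * k) ≠ i then
            uu ^ (t+1) * M.aa i (n - 1 - t) else 0)
          = (if ∀ s ≤ t + 1, 3 ^ s * k ≠ i then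
            uu ^ (t+1+1) * M.aa i (n + 1 - 1 - (t+1)) else 0) := by
        intro t
        rw [mul_ite, mul_zero]
        refine if_congr ?_ ?_ rfl
        · constructor
          · intro h s hs
            match s, hs with
            | 0, _ => simpa using hki
            | (s'+1), hs' =>
              have := h s' (by omega)
              intro hc
              apply this
              rw [← hc]; ring
          · intro h s hs
            have := h (s + 1) (by omega)
            intro hc
            apply this
            rw [← hc]; ring
        · have : n + 1 - 1 - (t + 1) = n - 1 - t := by omega
          rw [this, pow_succ, pow_succ]
          ring
      calc uu * M.aa i n + uu * ((if 3 ^ n * (3 * k) = i then uu ^ n else 0) +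
            ∑ t ∈ Finset.range n,
              (if ∀ s ≤ t, 3 ^ s * (3 * k) ≠ i then uu ^ (t+1) * M.aa i (n - 1 - t) else 0))
          = (if 3 ^ (n+1) * k = i then uu ^ (n+1) else 0) +
            ((∑ t ∈ Finset.range n, (if ∀ s ≤ t + 1, 3 ^ s * k ≠ i then
              uu ^ (t+1+1) * M.aa i (n + 1 - 1 - (t+1)) else 0)) + uu * M.aa i n) := by
            rw [mul_add, hfirst, Finset.mul_sum]
            rw [Finset.sum_congr rfl (fun t _ => hterm t)]
            ring
        _ = _ := rfl
end Chain

/-- First-hit source terms. -/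
noncomputable def MarkovChain.rr (M : MarkovChain) (i n : ℕ) : ℝ≥0∞ :=
  ∑' k, M.p 0 k * (if 3 ^ n * k = i then uu ^ n else 0)

/-- Censored weights. -/
noncomputable def MarkovChain.qq (M : MarkovChain) (i t : ℕ) : ℝ≥0∞ :=
  ∑' k, M.p 0 k * (if ∀ s ≤ t, 3 ^ s * k ≠ i then 1 else 0)

section Chain2
variable (M : MarkovChain) (i : ℕ)
variable (h0 : ∀ j : ℕ, M.p 0 j = if j = 0 then 0 else (2 : ℝ≥0∞)⁻¹ ^ j)
variable (hi : ∀ i j : ℕ, 1 ≤ i →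
      M.p i j = if j = 0 then (2 : ℝ≥0∞)⁻¹ else if j = 3 * i then (2 : ℝ≥0∞)⁻¹ else 0)
variable (hi1 : 1 ≤ i)

/-- The renewal recursion for the first-hit sequence from `0`. -/
lemma aa_rec
    (h0 : ∀ j : ℕ, M.p 0 j = if j = 0 then 0 else (2 : ℝ≥0∞)⁻¹ ^ j)
    (hi : ∀ i j : ℕ, 1 ≤ i →
      M.p i j = if j = 0 then (2 : ℝ≥0∞)⁻¹ else if j = 3 * i then (2 : ℝ≥0∞)⁻¹ else 0)
    (hi1 : 1 ≤ i) (n : ℕ) :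
    M.aa i (n+1) = M.rr i n +
      ∑ t ∈ Finset.range n, M.qq i t * (uu ^ (t+1) * M.aa i (n - 1 - t)) := by
  have h1 : M.aa i (n+1) = ∑' k, M.p 0 k * M.hitAt i n k := hit0_succ M i n hi1
  rw [h1]
  have h2 : ∀ k, M.p 0 k * M.hitAt i n k =
      M.p 0 k * (if 3 ^ n * k = i then uu ^ n else 0) +
      ∑ t ∈ Finset.range n, (M.p 0 k * (if ∀ s ≤ t, 3 ^ s * k ≠ i then 1 else 0)) *
        (uu ^ (t+1) * M.aa i (n - 1 - t)) := by
    intro k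
    rcases Nat.eq_zero_or_pos k with hk | hk
    · subst hk
      rw [p0_0 M h0]
      simp
    · rw [hform M hi i hi1 n k hk, mul_add, Finset.mul_sum]
      congr 1
      apply Finset.sum_congr rfl
      intro t _
      by_cases hc : ∀ s ≤ t, 3 ^ s * k ≠ i
      · rw [if_pos hc, if_pos hc, mul_one]
      · rw [if_neg hc, if_neg hc, mul_zero, zero_mul]
  rw [tsum_congr h2, ENNReal.tsum_add]
  congr 1
  rw [Summable.tsum_finsetSum (fun _ _ => ENNReal.summable)]
  apply Finset.sum_congr rfl
  intro t _
  rw [ENNReal.tsum_mul_right]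
  rfl

lemma rr_le (n : ℕ) : M.rr i n ≤ uu ^ n := by
  calc M.rr i n ≤ ∑' k, M.p 0 k * uu ^ n := by
        apply Summable.tsum_le_tsum _ ENNReal.summable ENNReal.summable
        intro k
        apply mul_le_mul_right
        split <;> simp
    _ = uu ^ n := by rw [ENNReal.tsum_mul_right, M.row_sum 0, one_mul]

lemma qq_le (t : ℕ) : M.qq i t ≤ 1 := by
  calc M.qq i t ≤ ∑' k, M.p 0 k * 1 := by
        apply Summable.tsum_le_tsum _ ENNReal.summable ENNReal.summable
        intro k
        apply mul_le_mul_right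
        split <;> simp
    _ = 1 := by rw [ENNReal.tsum_mul_right, M.row_sum 0, one_mul]

lemma pow_unique {k m n : ℕ} (hk : 1 ≤ k) (hm : 3 ^ m * k = i) (hn : 3 ^ n * k = i) :
    m = n := by
  have h : 3 ^ m * k = 3 ^ n * k := by rw [hm, hn]
  have h2 : 3 ^ m = 3 ^ n := Nat.eq_of_mul_eq_mul_right (by omega) h
  exact Nat.pow_right_injective (by norm_num) h2

/-- Conservation of mass: source plus censored weights sum to one. -/
lemma mass_eq
    (h0 : ∀ j : ℕ, M.p 0 j = if j = 0 then 0 else (2 : ℝ≥0∞)⁻¹ ^ j) (hi1 : 1 ≤ i) : (∑' n, M.rr i n) + (∑' t, M.qq i t * uu ^ (t+1)) = 1 := by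
  have hr : ∑' n, M.rr i n
      = ∑' k, M.p 0 k * (∑' n, if 3 ^ n * k = i then uu ^ n else 0) := by
    simp only [MarkovChain.rr]
    rw [ENNReal.tsum_comm (f := fun n k => M.p 0 k * (if 3 ^ n * k = i then uu ^ n else 0))]
    apply tsum_congr
    intro k
    rw [ENNReal.tsum_mul_left]
  have hq : ∑' t, M.qq i t * uu ^ (t+1)
      = ∑' k, M.p 0 k * (∑' t, if ∀ s ≤ t, 3 ^ s * k ≠ i then uu ^ (t+1) else 0) := by
    have h1 : ∀ t, M.qq i t * uu ^ (t+1)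
        = ∑' k, M.p 0 k * (if ∀ s ≤ t, 3 ^ s * k ≠ i then uu ^ (t+1) else 0) := by
      intro t
      rw [MarkovChain.qq, ← ENNReal.tsum_mul_right]
      apply tsum_congr
      intro k
      by_cases hc : ∀ s ≤ t, 3 ^ s * k ≠ i
      · rw [if_pos hc, if_pos hc, mul_one]
      · rw [if_neg hc, if_neg hc, mul_zero, zero_mul]
    rw [tsum_congr h1]
    rw [ENNReal.tsum_comm (f := fun t k => M.p 0 k * (if ∀ s ≤ t, 3 ^ s * k ≠ i then uu ^ (t+1) else 0))]
    apply tsum_congr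
    intro k
    rw [ENNReal.tsum_mul_left]
  rw [hr, hq, ← ENNReal.tsum_add]
  have hpt : ∀ k, M.p 0 k * (∑' n, if 3 ^ n * k = i then uu ^ n else 0) +
      M.p 0 k * (∑' t, if ∀ s ≤ t, 3 ^ s * k ≠ i then uu ^ (t+1) else 0) = M.p 0 k := by
    intro k
    rcases Nat.eq_zero_or_pos k with hk | hk
    · subst hk; rw [p0_0 M h0]; simp
    · rw [← mul_add]
      have : (∑' n, if 3 ^ n * k = i then uu ^ n else 0) +
          (∑' t, if ∀ s ≤ t, 3 ^ s * k ≠ i then uu ^ (t+1) else 0) = 1 := by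
        by_cases hm : ∃ m, 3 ^ m * k = i
        · obtain ⟨m, hm⟩ := hm
          have hS1 : (∑' n, if 3 ^ n * k = i then uu ^ n else 0) = uu ^ m := by
            rw [tsum_eq_single m (by
              intro n hn
              rw [if_neg (fun hc => hn (pow_unique i hk hc hm))])]
            rw [if_pos hm]
          have hS2 : (∑' t, if ∀ s ≤ t, 3 ^ s * k ≠ i then uu ^ (t+1) else 0)
              = ∑ t ∈ Finset.range m, uu ^ (t+1) := by
            rw [tsum_eq_sum (s := Finset.range m) (by
              intro t ht
              rw [if_neg]
              push_neg
              exact ⟨m, by simpa using ht, hm⟩)]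
            apply Finset.sum_congr rfl
            intro t ht
            rw [if_pos]
            intro s hs hc
            have : s = m := pow_unique i hk hc hm
            simp only [Finset.mem_range] at ht
            omega
          rw [hS1, hS2, add_comm]
          exact geom_partial m
        · push_neg at hm
          have hS1 : (∑' n, if 3 ^ n * k = i then uu ^ n else 0) = 0 := by
            convert tsum_zero with n
            rw [if_neg (hm n)]
          have hS2 : (∑' t, if ∀ s ≤ t, 3 ^ s * k ≠ i then uu ^ (t+1) else 0) = 1 := by
            rw [tsum_congr (fun t => if_pos (fun s _ => hm s))]
            exact geom_tail
          rw [hS1, hS2, zero_add]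
      rw [this, mul_one]
  rw [tsum_congr hpt, M.row_sum 0]

lemma rr_pos
    (h0 : ∀ j : ℕ, M.p 0 j = if j = 0 then 0 else (2 : ℝ≥0∞)⁻¹ ^ j) (hi1 : 1 ≤ i) : uu ^ i ≤ ∑' n, M.rr i n := by
  have h1 : uu ^ i ≤ M.rr i 0 := by
    have : M.p 0 i * (if 3 ^ 0 * i = i then uu ^ 0 else 0) = uu ^ i := by
      rw [if_pos (by ring), pow_zero, mul_one, h0, if_neg (by omega)]
      rfl
    calc uu ^ i = M.p 0 i * (if 3 ^ 0 * i = i then uu ^ 0 else 0) := this.symm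
      _ ≤ M.rr i 0 := ENNReal.le_tsum i
  exact le_trans h1 (ENNReal.le_tsum 0)

end Chain2

section Chain3
variable (M : MarkovChain) (i : ℕ)

/-- The chain started at `0` hits `i ≥ 1` almost surely. -/
lemma A_eq_one
    (h0 : ∀ j : ℕ, M.p 0 j = if j = 0 then 0 else (2 : ℝ≥0∞)⁻¹ ^ j)
    (hi : ∀ i j : ℕ, 1 ≤ i →
      M.p i j = if j = 0 then (2 : ℝ≥0∞)⁻¹ else if j = 3 * i then (2 : ℝ≥0∞)⁻¹ else 0)
    (hi1 : 1 ≤ i) :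
    ∑' n, M.aa i n = 1 := by
  set A := ∑' n, M.aa i n with hA
  set R := ∑' n, M.rr i n with hR
  set W := ∑' t, M.qq i t * uu ^ (t+1) with hW
  have hRW : R + W = 1 := mass_eq M i h0 hi1
  have hA1 : A ≤ 1 := hit_tsum_le_one M i 0
  have e4 : ∀ t, ∑' s, M.qq i t * (uu ^ (t+1) * M.aa i s)
      = M.qq i t * uu ^ (t+1) * A := by
    intro t
    rw [ENNReal.tsum_mul_left, ENNReal.tsum_mul_left, ← hA, mul_assoc]
  have key : A = R + W * A := by
    conv_lhs => rw [hA, tsum_eq_zero_add' ENNReal.summable, aa_zero M i hi1, zero_add,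
      tsum_congr (fun n => aa_rec M i h0 hi hi1 n), ENNReal.tsum_add,
      tsum_tri (fun t s => M.qq i t * (uu ^ (t+1) * M.aa i s)),
      tsum_congr e4, ENNReal.tsum_mul_right]
  have hRn0 : R ≠ 0 := by
    intro h
    have := rr_pos M i h0 hi1
    rw [← hR, h, le_zero_iff] at this
    exact (pow_ne_zero i uu_ne_zero) this
  have hRle : R ≤ 1 := le_trans (le_add_right le_rfl) (le_of_eq hRW)
  have hWle : W ≤ 1 := le_trans (le_add_left le_rfl) (le_of_eq hRW)
  have hAne : A ≠ ⊤ := ne_top_of_le_ne_top ENNReal.one_ne_top hA1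
  have hRne : R ≠ ⊤ := ne_top_of_le_ne_top ENNReal.one_ne_top hRle
  have hWne : W ≠ ⊤ := ne_top_of_le_ne_top ENNReal.one_ne_top hWle
  have hWAne : W * A ≠ ⊤ := ENNReal.mul_ne_top hWne hAne
  -- pass to reals
  have hkey' : A.toReal = R.toReal + W.toReal * A.toReal := by
    conv_lhs => rw [key]
    rw [ENNReal.toReal_add hRne hWAne, ENNReal.toReal_mul]
  have hRW' : R.toReal + W.toReal = 1 := by
    rw [← ENNReal.toReal_add hRne hWne, hRW, ENNReal.toReal_one]
  have hRpos : 0 < R.toReal := ENNReal.toReal_pos hRn0 hRne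
  have hx : A.toReal = 1 := by
    have h1 : R.toReal * A.toReal = R.toReal := by nlinarith
    have := mul_left_cancel₀ (ne_of_gt hRpos) (h1.trans (mul_one R.toReal).symm)
    exact this
  calc A = ENNReal.ofReal (A.toReal) := (ENNReal.ofReal_toReal hAne).symm
    _ = 1 := by rw [hx]; simp

/-- Finite expected hitting time of `i ≥ 1` from `0`. -/
lemma F_le
    (h0 : ∀ j : ℕ, M.p 0 j = if j = 0 then 0 else (2 : ℝ≥0∞)⁻¹ ^ j)
    (hi : ∀ i j : ℕ, 1 ≤ i →
      M.p i j = if j = 0 then (2 : ℝ≥0∞)⁻¹ else if j = 3 * i then (2 : ℝ≥0∞)⁻¹ else 0)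
    (hi1 : 1 ≤ i) :
    ∑' n : ℕ, ((n : ℝ≥0∞) + 1) * M.aa i n ≤ 12 * (∑' n, M.rr i n)⁻¹ := by
  set R := ∑' n, M.rr i n with hR
  set W := ∑' t, M.qq i t * uu ^ (t+1) with hW
  have hRW : R + W = 1 := mass_eq M i h0 hi1
  have hRle : R ≤ 1 := le_trans (le_add_right le_rfl) (le_of_eq hRW)
  have hWR : W = 1 - R := by
    rw [← hRW]; rw [ENNReal.add_sub_cancel_left (ne_top_of_le_ne_top ENNReal.one_ne_top hRle)]
  have hA1 : ∑' n, M.aa i n ≤ 1 := hit_tsum_le_one M i 0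
  apply Summable.tsum_le_of_sum_range_le ENNReal.summable
  intro N
  induction N with
  | zero => simp
  | succ N ihN =>
    rw [Finset.sum_range_succ']
    have hzero : ((0:ℕ) : ℝ≥0∞) + 1 = 1 := by norm_num
    rw [aa_zero M i hi1]
    simp only [Nat.cast_zero, mul_zero, add_zero]
    -- bound ∑_{n<N} (n+2) * aa (n+1)
    have hterm : ∀ n, (((n+1 : ℕ) : ℝ≥0∞) + 1) * M.aa i (n+1)
        = ((n : ℝ≥0∞) + 2) * M.rr i n +
          ∑ t ∈ Finset.range n, (((t : ℝ≥0∞) + 2) * (M.qq i t * (uu ^ (t+1) * M.aa i (n-1-t)))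
            + (((n-1-t : ℕ) : ℝ≥0∞) + 1) * (M.qq i t * (uu ^ (t+1) * M.aa i (n-1-t)))) := by
      intro n
      rw [aa_rec M i h0 hi hi1 n, mul_add, Finset.mul_sum]
      have hcast : (((n+1 : ℕ) : ℝ≥0∞) + 1) = (n : ℝ≥0∞) + 2 := by push_cast; ring
      rw [hcast]
      congr 1
      apply Finset.sum_congr rfl
      intro t ht
      simp only [Finset.mem_range] at ht
      obtain ⟨s, hs⟩ : ∃ s, n - 1 - t = s := ⟨_, rfl⟩
      rw [hs]
      have : (n : ℝ≥0∞) + 2 = ((t : ℝ≥0∞) + 2) + (((s : ℕ) : ℝ≥0∞) + 1) := by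
        have hn : n = t + s + 1 := by omega
        subst hn
        push_cast; ring
      rw [this, add_mul]
    rw [Finset.sum_congr rfl (fun n _ => hterm n)]
    rw [Finset.sum_add_distrib]
    have hb1 : ∑ n ∈ Finset.range N, ((n : ℝ≥0∞) + 2) * M.rr i n ≤ 8 := by
      calc ∑ n ∈ Finset.range N, ((n : ℝ≥0∞) + 2) * M.rr i n
          ≤ ∑ n ∈ Finset.range N, ((n : ℝ≥0∞) + 2) * uu ^ n := by
            exact Finset.sum_le_sum (fun n _ => mul_le_mul_right (rr_le M i n) _)
        _ ≤ ∑' n : ℕ, ((n : ℝ≥0∞) + 2) * uu ^ n := ENNReal.sum_le_tsum _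
        _ ≤ ∑' n : ℕ, (2 * (((n : ℝ≥0∞) + 1) * uu ^ n)) := by
            apply Summable.tsum_le_tsum _ ENNReal.summable ENNReal.summable
            intro n
            have hco : (n : ℝ≥0∞) + 2 ≤ 2 * ((n : ℝ≥0∞) + 1) := by
              calc (n : ℝ≥0∞) + 2 ≤ 2 * (n : ℝ≥0∞) + 2 := by
                    exact add_le_add (le_mul_of_one_le_left zero_le one_le_two) le_rfl
                _ = 2 * ((n : ℝ≥0∞) + 1) := by ring
            calc ((n : ℝ≥0∞) + 2) * uu ^ n ≤ (2 * ((n : ℝ≥0∞) + 1)) * uu ^ n :=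
                  mul_le_mul_left hco _
              _ = 2 * (((n : ℝ≥0∞) + 1) * uu ^ n) := mul_assoc _ _ _
        _ = 2 * ∑' n : ℕ, ((n : ℝ≥0∞) + 1) * uu ^ n := ENNReal.tsum_mul_left
        _ ≤ 2 * 4 := mul_le_mul_right nat_geom_tsum _
        _ = 8 := by norm_num
    have hRn0 : R ≠ 0 := by
      intro h
      have := rr_pos M i h0 hi1
      rw [← hR, h, le_zero_iff] at this
      exact (pow_ne_zero i uu_ne_zero) this
    have hb2 : ∑ n ∈ Finset.range N, ∑ t ∈ Finset.range n,
        (((t : ℝ≥0∞) + 2) * (M.qq i t * (uu ^ (t+1) * M.aa i (n-1-t)))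
          + (((n-1-t : ℕ) : ℝ≥0∞) + 1) * (M.qq i t * (uu ^ (t+1) * M.aa i (n-1-t))))
        ≤ 4 + (1 - R) * (12 * R⁻¹) := by
      calc ∑ n ∈ Finset.range N, ∑ t ∈ Finset.range n,
          (((t : ℝ≥0∞) + 2) * (M.qq i t * (uu ^ (t+1) * M.aa i (n-1-t)))
            + (((n-1-t : ℕ) : ℝ≥0∞) + 1) * (M.qq i t * (uu ^ (t+1) * M.aa i (n-1-t))))
          ≤ ∑ t ∈ Finset.range N, ∑ s ∈ Finset.range N,
            (((t : ℝ≥0∞) + 2) * (M.qq i t * (uu ^ (t+1) * M.aa i s))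
              + ((s : ℝ≥0∞) + 1) * (M.qq i t * (uu ^ (t+1) * M.aa i s))) :=
          sum_tri_le (fun t s => ((t : ℝ≥0∞) + 2) * (M.qq i t * (uu ^ (t+1) * M.aa i s))
              + ((s : ℝ≥0∞) + 1) * (M.qq i t * (uu ^ (t+1) * M.aa i s))) N
        _ = (∑ t ∈ Finset.range N, ∑ s ∈ Finset.range N,
              ((t : ℝ≥0∞) + 2) * (M.qq i t * (uu ^ (t+1) * M.aa i s)))
            + ∑ t ∈ Finset.range N, ∑ s ∈ Finset.range N,
              ((s : ℝ≥0∞) + 1) * (M.qq i t * (uu ^ (t+1) * M.aa i s)) := by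
            rw [← Finset.sum_add_distrib]
            apply Finset.sum_congr rfl
            intro t _
            rw [← Finset.sum_add_distrib]
        _ ≤ 4 + (1 - R) * (12 * R⁻¹) := by
            apply add_le_add
            · -- first grid sum
              calc ∑ t ∈ Finset.range N, ∑ s ∈ Finset.range N,
                    ((t : ℝ≥0∞) + 2) * (M.qq i t * (uu ^ (t+1) * M.aa i s))
                  = ∑ t ∈ Finset.range N,
                    ((t : ℝ≥0∞) + 2) * (M.qq i t * (uu ^ (t+1) * ∑ s ∈ Finset.range N, M.aa i s)) := by
                    apply Finset.sum_congr rfl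
                    intro t _
                    rw [Finset.mul_sum, Finset.mul_sum, Finset.mul_sum]
                _ ≤ ∑ t ∈ Finset.range N, ((t : ℝ≥0∞) + 2) * uu ^ (t+1) := by
                    apply Finset.sum_le_sum
                    intro t _
                    apply mul_le_mul_right
                    calc M.qq i t * (uu ^ (t+1) * ∑ s ∈ Finset.range N, M.aa i s)
                        ≤ 1 * (uu ^ (t+1) * 1) := by
                          apply mul_le_mul (qq_le M i t)
                          · apply mul_le_mul_right
                            exact le_trans (ENNReal.sum_le_tsum _) hA1
                          · exact zero_le
                          · exact zero_le
                      _ = uu ^ (t+1) := by rw [one_mul, mul_one]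
                _ ≤ ∑' t : ℕ, ((t : ℝ≥0∞) + 2) * uu ^ (t+1) := ENNReal.sum_le_tsum _
                _ ≤ 4 := nat_geom_tsum'
            · -- second grid sum
              calc ∑ t ∈ Finset.range N, ∑ s ∈ Finset.range N,
                    ((s : ℝ≥0∞) + 1) * (M.qq i t * (uu ^ (t+1) * M.aa i s))
                  = (∑ t ∈ Finset.range N, M.qq i t * uu ^ (t+1)) *
                    (∑ s ∈ Finset.range N, ((s : ℝ≥0∞) + 1) * M.aa i s) := by
                    rw [Finset.sum_mul_sum]
                    apply Finset.sum_congr rfl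
                    intro t _
                    apply Finset.sum_congr rfl
                    intro s _
                    ring
                _ ≤ W * (12 * R⁻¹) := by
                    apply mul_le_mul _ ihN zero_le zero_le
                    rw [hW]
                    exact ENNReal.sum_le_tsum _
                _ = (1 - R) * (12 * R⁻¹) := by rw [hWR]
    calc ∑ n ∈ Finset.range N, ((n : ℝ≥0∞) + 2) * M.rr i n +
          ∑ n ∈ Finset.range N, ∑ t ∈ Finset.range n,
          (((t : ℝ≥0∞) + 2) * (M.qq i t * (uu ^ (t+1) * M.aa i (n-1-t)))
            + (((n-1-t : ℕ) : ℝ≥0∞) + 1) * (M.qq i t * (uu ^ (t+1) * M.aa i (n-1-t))))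
        ≤ 8 + (4 + (1 - R) * (12 * R⁻¹)) := add_le_add hb1 hb2
      _ = 12 * R⁻¹ := by
          rw [← add_assoc]
          have h84 : (8 : ℝ≥0∞) + 4 = 12 := by norm_num
          rw [h84]
          calc (12 : ℝ≥0∞) + (1 - R) * (12 * R⁻¹) = 12 * ((1 - R) * R⁻¹ + 1) := by ring
            _ = 12 * R⁻¹ := by rw [inv_identity hRle hRn0]
end Chain3

section Chain4
variable (M : MarkovChain) (i : ℕ)

lemma hit3i
    (hi : ∀ i j : ℕ, 1 ≤ i →
      M.p i j = if j = 0 then (2 : ℝ≥0∞)⁻¹ else if j = 3 * i then (2 : ℝ≥0∞)⁻¹ else 0)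
    (hi1 : 1 ≤ i) (n : ℕ) :
    M.hitAt i n (3 * i) = ∑ t ∈ Finset.range n, uu ^ (t+1) * M.aa i (n - 1 - t) := by
  rw [hform M hi i hi1 n (3 * i) (by omega)]
  have h1 : ¬ (3 ^ n * (3 * i) = i) := by
    have : 3 * i ≤ 3 ^ n * (3 * i) := Nat.le_mul_of_pos_left _ (pow_pos (by norm_num) n)
    omega
  rw [if_neg h1, zero_add]
  apply Finset.sum_congr rfl
  intro t _
  rw [if_pos]
  intro s _
  have : 3 * i ≤ 3 ^ s * (3 * i) := Nat.le_mul_of_pos_left _ (pow_pos (by norm_num) s)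
  omega

lemma fr_eq
    (hi : ∀ i j : ℕ, 1 ≤ i →
      M.p i j = if j = 0 then (2 : ℝ≥0∞)⁻¹ else if j = 3 * i then (2 : ℝ≥0∞)⁻¹ else 0)
    (hi1 : 1 ≤ i) (n : ℕ) :
    M.firstReturn i n = uu * M.aa i n + uu * M.hitAt i n (3 * i) := by
  rw [MarkovChain.firstReturn]
  rw [tsum_pair (f := fun k => M.p i k * M.hitAt i n k) (a := 0) (b := 3 * i)
    (by omega) (by
      intro c hc0 hc3
      show M.p i c * M.hitAt i n c = 0
      rw [hi i c hi1, if_neg hc0, if_neg hc3, zero_mul])]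
  rw [hi i 0 hi1, hi i (3 * i) hi1, if_pos rfl, if_neg (by omega), if_pos rfl]
  rfl

/-- Recurrence at a positive state. -/
lemma fr_sum_pos
    (h0 : ∀ j : ℕ, M.p 0 j = if j = 0 then 0 else (2 : ℝ≥0∞)⁻¹ ^ j)
    (hi : ∀ i j : ℕ, 1 ≤ i →
      M.p i j = if j = 0 then (2 : ℝ≥0∞)⁻¹ else if j = 3 * i then (2 : ℝ≥0∞)⁻¹ else 0)
    (hi1 : 1 ≤ i) :
    ∑' n, M.firstReturn i n = 1 := by
  rw [tsum_congr (fun n => fr_eq M i hi hi1 n), ENNReal.tsum_add]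
  have hS : ∑' n, uu * M.hitAt i n (3 * i) = uu * 1 := by
    rw [ENNReal.tsum_mul_left]
    congr 1
    rw [tsum_congr (fun n => hit3i M i hi hi1 n)]
    rw [tsum_tri (fun t s => uu ^ (t+1) * M.aa i s)]
    have e4 : ∀ t : ℕ, ∑' s, uu ^ (t+1) * M.aa i s = uu ^ (t+1) * 1 := by
      intro t
      rw [ENNReal.tsum_mul_left, A_eq_one M i h0 hi hi1]
    rw [tsum_congr e4]
    calc ∑' t : ℕ, uu ^ (t+1) * 1 = ∑' t : ℕ, uu ^ (t+1) := by
          apply tsum_congr; intro t; rw [mul_one]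
      _ = 1 := geom_tail
  rw [hS, ENNReal.tsum_mul_left, A_eq_one M i h0 hi hi1, mul_one]
  exact uu_add_uu

/-- Finite expected return time at a positive state. -/
lemma fr_moment_pos
    (h0 : ∀ j : ℕ, M.p 0 j = if j = 0 then 0 else (2 : ℝ≥0∞)⁻¹ ^ j)
    (hi : ∀ i j : ℕ, 1 ≤ i →
      M.p i j = if j = 0 then (2 : ℝ≥0∞)⁻¹ else if j = 3 * i then (2 : ℝ≥0∞)⁻¹ else 0)
    (hi1 : 1 ≤ i) :
    ∑' n : ℕ, ((n : ℝ≥0∞) + 1) * M.firstReturn i n < ⊤ := by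
  have hFlt : ∑' n : ℕ, ((n : ℝ≥0∞) + 1) * M.aa i n < ⊤ := by
    apply lt_of_le_of_lt (F_le M i h0 hi hi1)
    apply ENNReal.mul_lt_top (by norm_num)
    rw [ENNReal.inv_lt_top]
    apply lt_of_lt_of_le _ (rr_pos M i h0 hi1)
    exact ENNReal.pow_pos (by simp [uu]) i
  set F := ∑' n : ℕ, ((n : ℝ≥0∞) + 1) * M.aa i n with hF
  have hA1 : ∑' n, M.aa i n ≤ 1 := hit_tsum_le_one M i 0
  have step1 : ∑' n : ℕ, ((n : ℝ≥0∞) + 1) * M.firstReturn i n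
      = ∑' n : ℕ, ((n : ℝ≥0∞) + 1) * (uu * M.aa i n)
        + ∑' n : ℕ, ((n : ℝ≥0∞) + 1) * (uu * M.hitAt i n (3 * i)) := by
    rw [← ENNReal.tsum_add]
    apply tsum_congr
    intro n
    rw [fr_eq M i hi hi1 n, mul_add]
  rw [step1]
  apply ENNReal.add_lt_top.mpr
  constructor
  · apply lt_of_le_of_lt _ hFlt
    apply Summable.tsum_le_tsum _ ENNReal.summable ENNReal.summable
    intro n
    calc ((n : ℝ≥0∞) + 1) * (uu * M.aa i n) ≤ ((n : ℝ≥0∞) + 1) * (1 * M.aa i n) :=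
          mul_le_mul_right (mul_le_mul_left uu_le_one _) _
      _ = ((n : ℝ≥0∞) + 1) * M.aa i n := by rw [one_mul]
  · -- second piece
    have hb : ∑' n : ℕ, ((n : ℝ≥0∞) + 1) * (uu * M.hitAt i n (3 * i))
        ≤ ∑' n : ℕ, ∑ t ∈ Finset.range n,
          (((t : ℝ≥0∞) + 1) * uu ^ (t+1) * M.aa i (n-1-t)
            + uu ^ (t+1) * ((((n-1-t : ℕ) : ℝ≥0∞) + 1) * M.aa i (n-1-t))) := by
      apply Summable.tsum_le_tsum _ ENNReal.summable ENNReal.summable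
      intro n
      rw [hit3i M i hi hi1 n]
      calc ((n : ℝ≥0∞) + 1) * (uu * ∑ t ∈ Finset.range n, uu ^ (t+1) * M.aa i (n - 1 - t))
          ≤ ((n : ℝ≥0∞) + 1) * (1 * ∑ t ∈ Finset.range n, uu ^ (t+1) * M.aa i (n - 1 - t)) :=
            mul_le_mul_right (mul_le_mul_left uu_le_one _) _
        _ = ∑ t ∈ Finset.range n, ((n : ℝ≥0∞) + 1) * (uu ^ (t+1) * M.aa i (n - 1 - t)) := by
            rw [one_mul, Finset.mul_sum]
        _ ≤ _ := by
            apply Finset.sum_le_sum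
            intro t ht
            simp only [Finset.mem_range] at ht
            obtain ⟨s, hs⟩ : ∃ s, n - 1 - t = s := ⟨_, rfl⟩
            rw [hs]
            have hcast : (n : ℝ≥0∞) + 1 = ((t : ℝ≥0∞) + 1) + ((s : ℝ≥0∞) + 1) := by
              have hn : n = t + s + 1 := by omega
              subst hn; push_cast; ring
            rw [hcast, add_mul]
            apply add_le_add
            · apply le_of_eq; ring
            · apply le_of_eq; ring
    apply lt_of_le_of_lt hb
    rw [tsum_tri (fun t s => ((t : ℝ≥0∞) + 1) * uu ^ (t+1) * M.aa i s
      + uu ^ (t+1) * (((s : ℝ≥0∞) + 1) * M.aa i s))]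
    have e5 : ∀ t : ℕ, (∑' s : ℕ, (((t : ℝ≥0∞) + 1) * uu ^ (t+1) * M.aa i s
        + uu ^ (t+1) * (((s : ℝ≥0∞) + 1) * M.aa i s)))
        = ((t : ℝ≥0∞) + 1) * uu ^ (t+1) * (∑' s, M.aa i s) + uu ^ (t+1) * F := by
      intro t
      rw [ENNReal.tsum_add, ENNReal.tsum_mul_left, ENNReal.tsum_mul_left, hF]
    rw [tsum_congr e5, ENNReal.tsum_add]
    apply ENNReal.add_lt_top.mpr
    constructor
    · apply lt_of_le_of_lt _ (show (4:ℝ≥0∞) < ⊤ by norm_num)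
      calc ∑' t : ℕ, ((t : ℝ≥0∞) + 1) * uu ^ (t+1) * (∑' s, M.aa i s)
          ≤ ∑' t : ℕ, ((t : ℝ≥0∞) + 1) * uu ^ (t+1) * 1 :=
            Summable.tsum_le_tsum (fun t => mul_le_mul_right hA1 _) ENNReal.summable ENNReal.summable
        _ = ∑' t : ℕ, ((t : ℝ≥0∞) + 1) * uu ^ (t+1) := by
            apply tsum_congr; intro t; rw [mul_one]
        _ ≤ 4 := nat_geom_tsum''
    · rw [ENNReal.tsum_mul_right]
      apply ENNReal.mul_lt_top _ hFlt
      calc ∑' t : ℕ, uu ^ (t+1) = 1 := geom_tail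
        _ < ⊤ := by norm_num

end Chain4

section Chain5
variable (M : MarkovChain)

lemma hit0_pos
    (hi : ∀ i j : ℕ, 1 ≤ i →
      M.p i j = if j = 0 then (2 : ℝ≥0∞)⁻¹ else if j = 3 * i then (2 : ℝ≥0∞)⁻¹ else 0) :
    ∀ n k, 1 ≤ k → M.hitAt 0 (n+1) k = uu ^ (n+1) := by
  intro n
  induction n with
  | zero =>
    intro k hk
    rw [hit_succ_pos M hi 0 k 0 hk, if_neg (by omega)]
    rw [hit_zero, hit_zero, if_pos rfl, if_neg (by omega)]
    rw [mul_one, mul_zero, add_zero, pow_one]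
  | succ n ih =>
    intro k hk
    rw [hit_succ_pos M hi 0 k (n+1) hk, if_neg (by omega)]
    have h1 : M.hitAt 0 (n+1) 0 = 0 := by
      show (if 0 = 0 then (0:ℝ≥0∞) else _) = 0
      rw [if_pos rfl]
    rw [h1, ih (3*k) (by omega), mul_zero, zero_add, ← pow_succ']

lemma fr0_zero
    (h0 : ∀ j : ℕ, M.p 0 j = if j = 0 then 0 else (2 : ℝ≥0∞)⁻¹ ^ j) :
    M.firstReturn 0 0 = 0 := by
  rw [MarkovChain.firstReturn]
  convert tsum_zero with k
  rcases Nat.eq_zero_or_pos k with hk | hk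
  · subst hk; rw [p0_0 M h0, zero_mul]
  · rw [hit_zero, if_neg (by omega), mul_zero]

lemma fr0_succ
    (h0 : ∀ j : ℕ, M.p 0 j = if j = 0 then 0 else (2 : ℝ≥0∞)⁻¹ ^ j)
    (hi : ∀ i j : ℕ, 1 ≤ i →
      M.p i j = if j = 0 then (2 : ℝ≥0∞)⁻¹ else if j = 3 * i then (2 : ℝ≥0∞)⁻¹ else 0)
    (n : ℕ) :
    M.firstReturn 0 (n+1) = uu ^ (n+1) := by
  rw [MarkovChain.firstReturn]
  have h1 : ∀ k, M.p 0 k * M.hitAt 0 (n+1) k = M.p 0 k * uu ^ (n+1) := by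
    intro k
    rcases Nat.eq_zero_or_pos k with hk | hk
    · subst hk; rw [p0_0 M h0, zero_mul, zero_mul]
    · rw [hit0_pos M hi n k hk]
  rw [tsum_congr h1, ENNReal.tsum_mul_right, M.row_sum 0, one_mul]

lemma fr_sum_zero
    (h0 : ∀ j : ℕ, M.p 0 j = if j = 0 then 0 else (2 : ℝ≥0∞)⁻¹ ^ j)
    (hi : ∀ i j : ℕ, 1 ≤ i →
      M.p i j = if j = 0 then (2 : ℝ≥0∞)⁻¹ else if j = 3 * i then (2 : ℝ≥0∞)⁻¹ else 0) :
    ∑' n, M.firstReturn 0 n = 1 := by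
  rw [tsum_eq_zero_add' ENNReal.summable, fr0_zero M h0, zero_add]
  rw [tsum_congr (fun n => fr0_succ M h0 hi n)]
  exact geom_tail

lemma fr_moment_zero
    (h0 : ∀ j : ℕ, M.p 0 j = if j = 0 then 0 else (2 : ℝ≥0∞)⁻¹ ^ j)
    (hi : ∀ i j : ℕ, 1 ≤ i →
      M.p i j = if j = 0 then (2 : ℝ≥0∞)⁻¹ else if j = 3 * i then (2 : ℝ≥0∞)⁻¹ else 0) :
    ∑' n : ℕ, ((n : ℝ≥0∞) + 1) * M.firstReturn 0 n < ⊤ := by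
  rw [tsum_eq_zero_add' ENNReal.summable, fr0_zero M h0, mul_zero, zero_add]
  have h1 : ∀ n : ℕ, (((n+1 : ℕ) : ℝ≥0∞) + 1) * M.firstReturn 0 (n+1)
      ≤ ((n : ℝ≥0∞) + 2) * uu ^ (n+1) := by
    intro n
    rw [fr0_succ M h0 hi n]
    apply mul_le_mul_left
    apply le_of_eq
    push_cast
    ring
  calc ∑' n : ℕ, (((n+1 : ℕ) : ℝ≥0∞) + 1) * M.firstReturn 0 (n+1)
      ≤ ∑' n : ℕ, ((n : ℝ≥0∞) + 2) * uu ^ (n+1) :=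
        Summable.tsum_le_tsum h1 ENNReal.summable ENNReal.summable
    _ ≤ 4 := nat_geom_tsum'
    _ < ⊤ := by norm_num

lemma drift_pos
    (hi : ∀ i j : ℕ, 1 ≤ i →
      M.p i j = if j = 0 then (2 : ℝ≥0∞)⁻¹ else if j = 3 * i then (2 : ℝ≥0∞)⁻¹ else 0)
    (i : ℕ) (hi1 : 1 ≤ i) : M.drift i = (i : ℝ) / 2 := by
  rw [MarkovChain.drift]
  rw [tsum_eq_sum (s := {0, 3 * i}) (by
    intro j hj
    simp only [Finset.mem_insert, Finset.mem_singleton] at hj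
    push_neg at hj
    rw [hi i j hi1, if_neg hj.1, if_neg hj.2]
    simp)]
  rw [Finset.sum_pair (by omega : (0:ℕ) ≠ 3 * i)]
  rw [hi i 0 hi1, hi i (3 * i) hi1, if_pos rfl, if_neg (by omega), if_pos rfl]
  have h2 : ((2 : ℝ≥0∞)⁻¹).toReal = (1:ℝ)/2 := by
    rw [ENNReal.toReal_inv]
    norm_num
  rw [h2]
  push_cast
  ring

end Chain5

/-- the chain with `p_{0i} = 2^{-i}` and `p_{i0} = p_{i,3i} = 1/2`
is positive recurrent although its mean drifts `γ_i = i/2` tend to infinity. -/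
theorem stmt18 (M : MarkovChain)
    (h0 : ∀ j : ℕ, M.p 0 j = if j = 0 then 0 else (2 : ℝ≥0∞)⁻¹ ^ j)
    (hi : ∀ i j : ℕ, 1 ≤ i →
      M.p i j = if j = 0 then (2 : ℝ≥0∞)⁻¹ else if j = 3 * i then (2 : ℝ≥0∞)⁻¹ else 0) :
    M.PositiveRecurrent ∧ (∀ i : ℕ, 1 ≤ i → M.drift i = (i : ℝ) / 2) ∧
    Filter.Tendsto M.drift Filter.atTop Filter.atTop := by
  refine ⟨⟨?_, ?_⟩, ?_, ?_⟩
  · intro i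
    rcases Nat.eq_zero_or_pos i with h | h
    · subst h; exact fr_sum_zero M h0 hi
    · exact fr_sum_pos M i h0 hi h
  · intro i
    rcases Nat.eq_zero_or_pos i with h | h
    · subst h; exact fr_moment_zero M h0 hi
    · exact fr_moment_pos M i h0 hi h
  · intro i hi1
    exact drift_pos M hi i hi1
  · have h2 : Tendsto (fun n : ℕ => (n : ℝ) / 2) atTop atTop :=
      (tendsto_natCast_atTop_atTop).atTop_div_const (by norm_num)
    apply h2.congr'
    filter_upwards [eventually_ge_atTop 1] with n hn
    exact (drift_pos M hi n hn).symm
end
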